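/- The language L(⊡) is less expressive than the language L(⊞) on the class of reflexive bimodal models. Concretely: (i) for every φ ∈ L(⊡) there is ψ ∈ L(⊞) equivalent to φ on all bimodal models (namely ⊞φ ∧ ⊞¬φ for ⊡φ); and (ii) there exist two pointed reflexive bimodal models (M,s) and (M',s') such that M,s ⊨ ⊞p and M',s' ⊭ ⊞p, while for every φ ∈ L(⊡), M,s ⊨ φ iff M',s' ⊨ φ. -/

import Mathlib

/-- Formulas built from propositional variables by ¬, ∧, ⊡ (`gbox`) and ⊞ (`pbox`). -/
inductive Form : Type
  | var : ℕ → Form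
  | neg : Form → Form
  | conj : Form → Form → Form
  | gbox : Form → Form
  | pbox : Form → Form

/-- A bimodal model: a nonempty set of worlds, two accessibility relations and a valuation. -/
structure BiModel : Type 1 where
  S : Type
  ne : Nonempty S
  R1 : S → S → Prop
  R2 : S → S → Prop
  V : ℕ → Set S

/-- Truth of a formula at a world. ⊡φ: all R1-successors and R2-successors agree
on φ. ⊞φ: either φ holds at all R1-successors, or ¬φ holds at all R2-successors. -/
def sat (M : BiModel) : M.S → Form → Prop
  | s, .var n => s ∈ M.V n
  | s, .neg φ => ¬ sat M s φ
  | s, .conj φ ψ => sat M s φ ∧ sat M s ψ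
  | s, .gbox φ => ∀ t u, M.R1 s t → M.R2 s u → (sat M t φ ↔ sat M u φ)
  | s, .pbox φ => (∀ t, M.R1 s t → sat M t φ) ∨ (∀ u, M.R2 s u → ¬ sat M u φ)

/-- φ belongs to the fragment L(⊡) (no occurrence of ⊞). -/
def Form.noPBox : Form → Prop
  | .var _ => True
  | .neg φ => φ.noPBox
  | .conj φ ψ => φ.noPBox ∧ ψ.noPBox
  | .gbox φ => φ.noPBox
  | .pbox _ => False

/-- φ belongs to the fragment L(⊞) (no occurrence of ⊡). -/
def Form.noGBox : Form → Prop
  | .var _ => True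
  | .neg φ => φ.noGBox
  | .conj φ ψ => φ.noGBox ∧ ψ.noGBox
  | .gbox _ => False
  | .pbox φ => φ.noGBox

/-- A model is serial if both relations are serial. -/
def SerialM (M : BiModel) : Prop := (∀ s, ∃ t, M.R1 s t) ∧ (∀ s, ∃ t, M.R2 s t)
/-- A model is transitive if both relations are transitive. -/
def TransM (M : BiModel) : Prop := Transitive M.R1 ∧ Transitive M.R2
/-- A model is Euclidean if both relations are Euclidean. -/
def EuclM (M : BiModel) : Prop :=
  (∀ x y z : M.S, M.R1 x y → M.R1 x z → M.R1 y z) ∧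
  (∀ x y z : M.S, M.R2 x y → M.R2 x z → M.R2 y z)
/-- A model is symmetric if both relations are symmetric. -/
def SymmM (M : BiModel) : Prop := Symmetric M.R1 ∧ Symmetric M.R2
/-- A model is reflexive if both relations are reflexive. -/
def ReflM (M : BiModel) : Prop := Reflexive M.R1 ∧ Reflexive M.R2

/-- The translation from L(⊡) into L(⊞). -/
def trF : Form → Form
  | .var n => .var n
  | .neg φ => .neg (trF φ)
  | .conj φ ψ => .conj (trF φ) (trF ψ)
  | .gbox φ => .conj (.pbox (trF φ)) (.pbox (.neg (trF φ)))
  | .pbox φ => .pbox (trF φ)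

lemma trF_noGBox : ∀ φ : Form, (trF φ).noGBox
  | .var _ => trivial
  | .neg φ => trF_noGBox φ
  | .conj φ ψ => ⟨trF_noGBox φ, trF_noGBox ψ⟩
  | .gbox φ => ⟨trF_noGBox φ, trF_noGBox φ⟩
  | .pbox φ => trF_noGBox φ

lemma gbox_iff_pbox (M : BiModel) (s : M.S) (χ : Form) :
    sat M s (.gbox χ) ↔ sat M s (.conj (.pbox χ) (.pbox (.neg χ))) := by
  simp only [sat]
  constructor
  · intro H
    constructor
    · by_cases h1 : ∀ t, M.R1 s t → sat M t χ
      · exact Or.inl h1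
      · push_neg at h1
        obtain ⟨t0, ht0, hns⟩ := h1
        exact Or.inr (fun u hu hsu => hns ((H t0 u ht0 hu).mpr hsu))
    · by_cases h2 : ∀ u, M.R2 s u → sat M u χ
      · exact Or.inr (fun u hu => not_not_intro (h2 u hu))
      · push_neg at h2
        obtain ⟨u0, hu0, hns⟩ := h2
        exact Or.inl (fun t ht hst => hns ((H t u0 ht hu0).mp hst))
  · rintro ⟨h1 | h1, h2 | h2⟩ t u ht hu
    · exact absurd (h1 t ht) (h2 t ht)
    · exact iff_of_true (h1 t ht) (not_not.mp (h2 u hu))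
    · exact iff_of_false (h2 t ht) (h1 u hu)
    · exact absurd (not_not.mp (h2 u hu)) (h1 u hu)

lemma trF_sat : ∀ (φ : Form) (M : BiModel) (s : M.S), sat M s φ ↔ sat M s (trF φ)
  | .var n, M, s => Iff.rfl
  | .neg φ, M, s => not_congr (trF_sat φ M s)
  | .conj φ ψ, M, s => and_congr (trF_sat φ M s) (trF_sat ψ M s)
  | .gbox φ, M, s => by
      refine Iff.trans ?_ (gbox_iff_pbox M s (trF φ))
      simp only [sat]
      constructor
      · intro H t u ht hu
        exact (trF_sat φ M t).symm.trans ((H t u ht hu).trans (trF_sat φ M u))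
      · intro H t u ht hu
        exact (trF_sat φ M t).trans ((H t u ht hu).trans (trF_sat φ M u).symm)
  | .pbox φ, M, s => by
      simp only [sat]
      exact or_congr (forall₂_congr fun t _ => trF_sat φ M t)
        (forall₂_congr fun u _ => not_congr (trF_sat φ M u))

/-- Swap the two accessibility relations. -/
def swapM (M : BiModel) : BiModel := ⟨M.S, M.ne, M.R2, M.R1, M.V⟩

lemma swap_sat (M : BiModel) : ∀ φ : Form, φ.noPBox → ∀ s : M.S,
    (sat M s φ ↔ sat (swapM M) s φ)
  | .var n, _, s => Iff.rfl
  | .neg φ, h, s => not_congr (swap_sat M φ h s)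
  | .conj φ ψ, h, s => and_congr (swap_sat M φ h.1 s) (swap_sat M ψ h.2 s)
  | .gbox φ, h, s => by
      simp only [sat]
      constructor
      · intro H t u ht hu
        exact (swap_sat M φ h t).symm.trans
          (((H u t hu ht).symm).trans (swap_sat M φ h u))
      · intro H t u ht hu
        exact (swap_sat M φ h t).trans (((H u t hu ht).symm).trans (swap_sat M φ h u).symm)
  | .pbox φ, h, s => absurd h (by simp [Form.noPBox])

/-- The concrete model for part (ii). -/
def Mex : BiModel where
  S := Bool
  ne := ⟨true⟩
  R1 := fun x y => x = y
  R2 := fun x y => x = true ∨ x = y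
  V := fun _ => {x | x = true}

/-- L(⊡) is less expressive than L(⊞) on the class of reflexive bimodal models:
(i) every L(⊡)-formula has an L(⊞)-equivalent on all models; (ii) there are two
pointed reflexive models distinguished by ⊞p but not by any L(⊡)-formula. -/
theorem stmt5 :
  (∀ φ : Form, φ.noPBox →
      ∃ ψ : Form, ψ.noGBox ∧ ∀ (M : BiModel) (s : M.S), (sat M s φ ↔ sat M s ψ)) ∧
    (∃ (M M' : BiModel) (s : M.S) (s' : M'.S),
      ReflM M ∧ ReflM M' ∧
      sat M s (Form.pbox (Form.var 0)) ∧ ¬ sat M' s' (Form.pbox (Form.var 0)) ∧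
      ∀ φ : Form, φ.noPBox → (sat M s φ ↔ sat M' s' φ)) := by
  constructor
  · intro φ hφ
    exact ⟨trF φ, trF_noGBox φ, fun M s => trF_sat φ M s⟩
  · refine ⟨Mex, swapM Mex, true, true, ?_, ?_, ?_, ?_, ?_⟩
    · exact ⟨fun x => rfl, fun x => Or.inr rfl⟩
    · exact ⟨fun x => Or.inr rfl, fun x => rfl⟩
    · left
      intro t ht
      simp only [Mex] at ht ⊢
      simp [sat, Mex, ← ht]
    · rintro (h | h)
      · have := h false (Or.inl rfl)
        simp [sat, Mex, swapM] at this
        exact Bool.false_ne_true this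
      · exact h true (rfl) (by simp [sat, Mex, swapM]; exact rfl)
    · intro φ hφ
      exact swap_sat Mex φ hφ true
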